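/- arXiv:1707.05712 — 2 statements merged into one kernel-verified Lean document; each statement's English description precedes it below -/
import Mathlib

section
/- Theorem 4 (second PAC-Bayesian domain adaptation bound): for any source domain S and target domain T over X×Y, any q > 1, and any probability measure ρ on H, R_T(G_ρ) ≤ (1/2)·d_{T_X}(ρ) + β_q · [e_S(ρ)]^{1−1/q} + η_{T∖S}. -/
open MeasureTheory Real
open scoped ENNReal NNReal

noncomputable section

/-- The 0-1 loss on labels in `{−1,+1}`, encoded by `Bool` (`false ↦ −1`, `true ↦ +1`). -/
def l01 (a b : Bool) : ℝ := if a = b then 0 else 1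

variable {X H : Type*} [MeasurableSpace X] [MeasurableSpace H]

/-- The expected error `R_P(h)` of a hypothesis `h` on a domain `P` over `X × Y`. -/
def risk (P : Measure (X × Bool)) (h : X → Bool) : ℝ := ∫ z, l01 (h z.1) z.2 ∂P

/-- The Gibbs risk `R_P(G_ρ) = E_{h~ρ} R_P(h)`. -/
def gibbsRisk (F : H → X → Bool) (P : Measure (X × Bool)) (ρ : Measure H) : ℝ :=
  ∫ h, risk P (F h) ∂ρ

/-- The expected disagreement `d_{D_X}(ρ) = E_{(h,h')~ρ⊗ρ} E_{x~D_X} ℓ(h(x),h'(x))`. -/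
def expDisag (F : H → X → Bool) (D : Measure X) (ρ : Measure H) : ℝ :=
  ∫ p, ∫ x, l01 (F p.1 x) (F p.2 x) ∂D ∂(ρ.prod ρ)

/-- The expected joint error `e_P(ρ) = E_{(h,h')~ρ⊗ρ} E_{(x,y)~P} ℓ(h(x),y)·ℓ(h'(x),y)`. -/
def jointErr (F : H → X → Bool) (P : Measure (X × Bool)) (ρ : Measure H) : ℝ :=
  ∫ p, ∫ z, l01 (F p.1 z.1) z.2 * l01 (F p.2 z.1) z.2 ∂P ∂(ρ.prod ρ)

/-- `β_q = (∫ (dT_A/dS)^q dS)^{1/q}`, where `T_A` is the absolutely continuous part of the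
Lebesgue decomposition of `T` with respect to `S`, so that `dT_A/dS = T.rnDeriv S`. -/
def betaQ (S T : Measure (X × Bool)) (q : ℝ) : ℝ :=
  (∫ z, (T.rnDeriv S z).toReal ^ q ∂S) ^ (1 / q)

/-- `η_{T∖S} = sup_{h∈H} ∫ ℓ(h(x),y) dT_⊥(x,y)`, where `T_⊥ = T.singularPart S`. -/
def etaTS (F : H → X → Bool) (S T : Measure (X × Bool)) : ℝ :=
  ⨆ h : H, ∫ z, l01 (F h z.1) z.2 ∂(T.singularPart S)

namespace PacAux

lemma l01_nonneg (a b : Bool) : 0 ≤ l01 a b := by unfold l01; split <;> norm_num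

lemma l01_le_one (a b : Bool) : l01 a b ≤ 1 := by unfold l01; split <;> norm_num

lemma l01_key (a b c : Bool) :
    l01 a c + l01 b c = l01 a b + 2 * (l01 a c * l01 b c) := by
  cases a <;> cases b <;> cases c <;> simp [l01] <;> norm_num

lemma l01_mul_rpow (a b c : Bool) {r : ℝ} (hr : r ≠ 0) :
    (l01 a c * l01 b c) ^ r = l01 a c * l01 b c := by
  cases a <;> cases b <;> cases c <;>
    simp [l01, Real.zero_rpow hr, Real.one_rpow]

variable {α : Type*} [MeasurableSpace α]

lemma measurable_l01 {u v : α → Bool} (hu : Measurable u) (hv : Measurable v) :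
    Measurable fun x => l01 (u x) (v x) := by
  unfold l01
  exact Measurable.ite (measurableSet_eq_fun hu hv)
    measurable_const measurable_const

lemma integrable01 (μ : Measure α) [IsFiniteMeasure μ] {φ : α → ℝ}
    (hm : AEStronglyMeasurable φ μ) (h0 : ∀ x, 0 ≤ φ x) (h1 : ∀ x, φ x ≤ 1) :
    Integrable φ μ :=
  (integrable_const 1).mono' hm (Filter.Eventually.of_forall fun x => by
    rw [Real.norm_eq_abs, abs_of_nonneg (h0 x)]; exact h1 x)

lemma integral_le_one (μ : Measure α) [IsFiniteMeasure μ] (hμ : μ Set.univ ≤ 1) {φ : α → ℝ}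
    (hm : AEStronglyMeasurable φ μ) (h0 : ∀ x, 0 ≤ φ x) (h1 : ∀ x, φ x ≤ 1) :
    ∫ x, φ x ∂μ ≤ 1 := by
  calc ∫ x, φ x ∂μ ≤ ∫ _x, (1:ℝ) ∂μ :=
        integral_mono (integrable01 μ hm h0 h1) (integrable_const 1) h1
  _ = (μ Set.univ).toReal := by simp [Measure.real]
  _ ≤ 1 := by
      have := ENNReal.toReal_mono ENNReal.one_ne_top hμ
      simpa using this

lemma jensen_rpow (μ : Measure α) [IsProbabilityMeasure μ] {φ : α → ℝ}
    (hm : AEStronglyMeasurable φ μ) (h0 : ∀ x, 0 ≤ φ x) (h1 : ∀ x, φ x ≤ 1)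
    {c : ℝ} (hc0 : 0 < c) (hc1 : c < 1) :
    ∫ x, φ x ^ c ∂μ ≤ (∫ x, φ x ∂μ) ^ c := by
  have hpq : (c⁻¹).HolderConjugate ((1 - c)⁻¹) :=
    Real.HolderConjugate.inv_one_sub_inv hc0 hc1
  have hmc : AEStronglyMeasurable (fun x => φ x ^ c) μ :=
    ((Real.continuous_rpow_const hc0.le).comp_aestronglyMeasurable hm)
  have h0c : ∀ x, 0 ≤ φ x ^ c := fun x => Real.rpow_nonneg (h0 x) c
  have hbc : ∀ x, φ x ^ c ≤ 1 := fun x => Real.rpow_le_one (h0 x) (h1 x) hc0.le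
  have hf : MemLp (fun x => φ x ^ c) (ENNReal.ofReal c⁻¹) μ :=
    (memLp_top_of_bound hmc 1 (Filter.Eventually.of_forall fun x => by
      rw [Real.norm_eq_abs, abs_of_nonneg (h0c x)]; exact hbc x)).mono_exponent le_top
  have hg : MemLp (fun _ : α => (1:ℝ)) (ENNReal.ofReal (1 - c)⁻¹) μ := memLp_const 1
  have H := integral_mul_le_Lp_mul_Lq_of_nonneg hpq
    (Filter.Eventually.of_forall h0c) (Filter.Eventually.of_forall fun _ => zero_le_one) hf hg
  simp only [mul_one] at H
  have e1 : ∫ x, (φ x ^ c) ^ c⁻¹ ∂μ = ∫ x, φ x ∂μ := by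
    refine integral_congr_ae (Filter.Eventually.of_forall fun x => ?_)
    show (φ x ^ c) ^ c⁻¹ = φ x
    rw [← Real.rpow_mul (h0 x), mul_inv_cancel₀ hc0.ne', Real.rpow_one]
  have e2 : ∫ _x : α, (1:ℝ) ^ (1 - c)⁻¹ ∂μ = 1 := by simp
  rw [e1, e2] at H
  calc ∫ x, φ x ^ c ∂μ ≤ (∫ x, φ x ∂μ) ^ (1 / c⁻¹) * 1 ^ (1 / (1 - c)⁻¹) := H
  _ = (∫ x, φ x ∂μ) ^ c := by rw [Real.one_rpow, mul_one, one_div, inv_inv]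

lemma holder_step (μ : Measure α) [IsFiniteMeasure μ] {q : ℝ} (hq : 1 < q)
    {w φ : α → ℝ} (hw : Measurable w) (hw0 : ∀ x, 0 ≤ w x)
    (hwq : Integrable (fun x => w x ^ q) μ)
    (hφ : AEStronglyMeasurable φ μ) (hφ0 : ∀ x, 0 ≤ φ x) (hφ1 : ∀ x, φ x ≤ 1)
    (hφpow : ∀ x, φ x ^ (Real.conjExponent q) = φ x) :
    ∫ x, w x * φ x ∂μ ≤ (∫ x, w x ^ q ∂μ) ^ (1 / q) * (∫ x, φ x ∂μ) ^ (1 - 1 / q) := by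
  have hpq := Real.HolderConjugate.conjExponent hq
  have hq0 : (0:ℝ) < q := lt_trans one_pos hq
  have A : ENNReal.ofReal q ≠ 0 := by
    simp only [ne_eq, ENNReal.ofReal_eq_zero, not_le]; exact hq0
  have B : ENNReal.ofReal q ≠ ⊤ := ENNReal.ofReal_ne_top
  have hfw : MemLp w (ENNReal.ofReal q) μ := by
    rw [← memLp_norm_rpow_iff hw.aestronglyMeasurable A B, ENNReal.toReal_ofReal hq0.le,
      ENNReal.div_self A B, memLp_one_iff_integrable]
    exact hwq.congr (Filter.Eventually.of_forall fun x => by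
      show w x ^ q = ‖w x‖ ^ q
      rw [Real.norm_eq_abs, abs_of_nonneg (hw0 x)])
  have hfφ : MemLp φ (ENNReal.ofReal (Real.conjExponent q)) μ :=
    (memLp_top_of_bound hφ 1 (Filter.Eventually.of_forall fun x => by
      rw [Real.norm_eq_abs, abs_of_nonneg (hφ0 x)]; exact hφ1 x)).mono_exponent le_top
  have H := integral_mul_le_Lp_mul_Lq_of_nonneg hpq
    (Filter.Eventually.of_forall hw0) (Filter.Eventually.of_forall hφ0) hfw hfφ
  have e2 : ∫ x, φ x ^ (Real.conjExponent q) ∂μ = ∫ x, φ x ∂μ := by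
    refine integral_congr_ae (Filter.Eventually.of_forall fun x => ?_)
    exact hφpow x
  rw [e2] at H
  have e3 : 1 - 1 / q = 1 / (Real.conjExponent q) := by
    rw [Real.conjExponent, one_div_div, sub_div, div_self hq0.ne']
  rw [e3]
  exact H

end PacAux

/-- Theorem 4 (second PAC-Bayesian domain adaptation bound): for any source domain `S` and
target domain `T` over `X×Y`, any `q > 1` (with `β_q` finite), and any probability measure
`ρ` on `H`, `R_T(G_ρ) ≤ (1/2)·d_{T_X}(ρ) + β_q · [e_S(ρ)]^{1−1/q} + η_{T∖S}`. -/
theorem second_pac_bayes_da_bound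
    (F : H → X → Bool) (hF : Measurable (Function.uncurry F))
    (S T : Measure (X × Bool)) [IsProbabilityMeasure S] [IsProbabilityMeasure T]
    (q : ℝ) (hq : 1 < q)
    (hβ : Integrable (fun z => (T.rnDeriv S z).toReal ^ q) S)
    (ρ : Measure H) [IsProbabilityMeasure ρ] :
    gibbsRisk F T ρ ≤ (1 / 2) * expDisag F (T.map Prod.fst) ρ
      + betaQ S T q * (jointErr F S ρ) ^ (1 - 1 / q) + etaTS F S T := by
  classical
  have hq0 : (0:ℝ) < q := lt_trans one_pos hq
  -- shorthand functions
  set f : H → (X × Bool) → ℝ := fun h z => l01 (F h z.1) z.2 with hf_def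
  set g : H × H → (X × Bool) → ℝ :=
    fun p z => l01 (F p.1 z.1) z.2 * l01 (F p.2 z.1) z.2 with hg_def
  set d : H × H → (X × Bool) → ℝ := fun p z => l01 (F p.1 z.1) (F p.2 z.1) with hd_def
  -- measurability
  have mF1 : Measurable fun p : (H × H) × (X × Bool) => F p.1.1 p.2.1 :=
    hF.comp (measurable_fst.fst.prodMk measurable_snd.fst)
  have mF2 : Measurable fun p : (H × H) × (X × Bool) => F p.1.2 p.2.1 :=
    hF.comp (measurable_fst.snd.prodMk measurable_snd.fst)
  have mf : Measurable fun p : H × (X × Bool) => f p.1 p.2 :=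
    PacAux.measurable_l01 (hF.comp (measurable_fst.prodMk measurable_snd.fst))
      measurable_snd.snd
  have mg : Measurable fun p : (H × H) × (X × Bool) => g p.1 p.2 :=
    (PacAux.measurable_l01 mF1 measurable_snd.snd).mul
      (PacAux.measurable_l01 mF2 measurable_snd.snd)
  have md : Measurable fun p : (H × H) × (X × Bool) => d p.1 p.2 :=
    PacAux.measurable_l01 mF1 mF2
  have mgp : ∀ p : H × H, Measurable (g p) := fun p => mg.comp measurable_prodMk_left
  have mdp : ∀ p : H × H, Measurable (d p) := fun p => md.comp measurable_prodMk_left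
  have mfh : ∀ h : H, Measurable (f h) := fun h => mf.comp measurable_prodMk_left
  -- pointwise bounds
  have f0 : ∀ h z, 0 ≤ f h z := fun h z => PacAux.l01_nonneg _ _
  have f1 : ∀ h z, f h z ≤ 1 := fun h z => PacAux.l01_le_one _ _
  have g0 : ∀ p z, 0 ≤ g p z := fun p z =>
    mul_nonneg (PacAux.l01_nonneg _ _) (PacAux.l01_nonneg _ _)
  have g1 : ∀ p z, g p z ≤ 1 := fun p z =>
    mul_le_one₀ (PacAux.l01_le_one _ _) (PacAux.l01_nonneg _ _) (PacAux.l01_le_one _ _)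
  have d0 : ∀ p z, 0 ≤ d p z := fun p z => PacAux.l01_nonneg _ _
  have d1 : ∀ p z, d p z ≤ 1 := fun p z => PacAux.l01_le_one _ _
  -- integrability of the inner integrands
  have intg : ∀ (μ : Measure (X × Bool)) [IsFiniteMeasure μ] (p : H × H),
      Integrable (g p) μ := fun μ _ p =>
    PacAux.integrable01 μ (mgp p).aestronglyMeasurable (g0 p) (g1 p)
  have intd : ∀ (μ : Measure (X × Bool)) [IsFiniteMeasure μ] (p : H × H),
      Integrable (d p) μ := fun μ _ p =>
    PacAux.integrable01 μ (mdp p).aestronglyMeasurable (d0 p) (d1 p)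
  have intf : ∀ (μ : Measure (X × Bool)) [IsFiniteMeasure μ] (h : H),
      Integrable (f h) μ := fun μ _ h =>
    PacAux.integrable01 μ (mfh h).aestronglyMeasurable (f0 h) (f1 h)
  -- measurability of parametric integrals
  have mG : ∀ (μ : Measure (X × Bool)) [SFinite μ],
      StronglyMeasurable fun p : H × H => ∫ z, g p z ∂μ := fun μ _ =>
    mg.stronglyMeasurable.integral_prod_right'
  have mD : ∀ (μ : Measure (X × Bool)) [SFinite μ],
      StronglyMeasurable fun p : H × H => ∫ z, d p z ∂μ := fun μ _ =>
    md.stronglyMeasurable.integral_prod_right'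
  have mRisk : StronglyMeasurable fun h : H => ∫ z, f h z ∂T :=
    mf.stronglyMeasurable.integral_prod_right'
  -- bounds on parametric integrals
  have Gb : ∀ (μ : Measure (X × Bool)) [IsFiniteMeasure μ], μ Set.univ ≤ 1 →
      ∀ p : H × H, (0 ≤ ∫ z, g p z ∂μ) ∧ (∫ z, g p z ∂μ) ≤ 1 := by
    intro μ _ hμ p
    exact ⟨integral_nonneg (g0 p),
      PacAux.integral_le_one μ hμ (mgp p).aestronglyMeasurable (g0 p) (g1 p)⟩
  -- integrability over ρ × ρ of parametric integrals
  have intG : ∀ (μ : Measure (X × Bool)) [IsFiniteMeasure μ], μ Set.univ ≤ 1 →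
      Integrable (fun p : H × H => ∫ z, g p z ∂μ) (ρ.prod ρ) := by
    intro μ _ hμ
    exact PacAux.integrable01 _ (mG μ).aestronglyMeasurable
      (fun p => (Gb μ hμ p).1) (fun p => (Gb μ hμ p).2)
  -- ## Step A : gibbsRisk = 1/2 expDisag + jointErr over T
  have hJT : jointErr F T ρ = ∫ p, ∫ z, g p z ∂T ∂(ρ.prod ρ) := rfl
  have hrisk_eq : ∀ h : H, risk T (F h) = ∫ z, f h z ∂T := fun h => rfl
  have hrisk0 : ∀ h : H, 0 ≤ risk T (F h) := fun h => integral_nonneg (f0 h)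
  have hrisk1 : ∀ h : H, risk T (F h) ≤ 1 := fun h =>
    PacAux.integral_le_one T measure_univ.le (mfh h).aestronglyMeasurable (f0 h) (f1 h)
  have hmap1 : (ρ.prod ρ).map Prod.fst = ρ := Measure.fst_prod
  have hmap2 : (ρ.prod ρ).map Prod.snd = ρ := Measure.snd_prod
  have hfst : ∫ p : H × H, risk T (F p.1) ∂(ρ.prod ρ) = gibbsRisk F T ρ := by
    have h1 : ∫ h, risk T (F h) ∂((ρ.prod ρ).map Prod.fst)
        = ∫ p : H × H, risk T (F p.1) ∂(ρ.prod ρ) :=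
      integral_map measurable_fst.aemeasurable
        (by rw [hmap1]; exact mRisk.aestronglyMeasurable)
    rw [gibbsRisk, ← h1, hmap1]
  have hsnd : ∫ p : H × H, risk T (F p.2) ∂(ρ.prod ρ) = gibbsRisk F T ρ := by
    have h1 : ∫ h, risk T (F h) ∂((ρ.prod ρ).map Prod.snd)
        = ∫ p : H × H, risk T (F p.2) ∂(ρ.prod ρ) :=
      integral_map measurable_snd.aemeasurable
        (by rw [hmap2]; exact mRisk.aestronglyMeasurable)
    rw [gibbsRisk, ← h1, hmap2]
  have hint1 : Integrable (fun p : H × H => risk T (F p.1)) (ρ.prod ρ) :=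
    PacAux.integrable01 _ ((mRisk.comp_measurable measurable_fst).aestronglyMeasurable)
      (fun p => hrisk0 p.1) (fun p => hrisk1 p.1)
  have hint2 : Integrable (fun p : H × H => risk T (F p.2)) (ρ.prod ρ) :=
    PacAux.integrable01 _ ((mRisk.comp_measurable measurable_snd).aestronglyMeasurable)
      (fun p => hrisk0 p.2) (fun p => hrisk1 p.2)
  have intDT : Integrable (fun p : H × H => ∫ z, d p z ∂T) (ρ.prod ρ) :=
    PacAux.integrable01 _ (mD T).aestronglyMeasurable
      (fun p => integral_nonneg (d0 p))
      (fun p => PacAux.integral_le_one T measure_univ.le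
        (mdp p).aestronglyMeasurable (d0 p) (d1 p))
  have key : ∀ p : H × H,
      risk T (F p.1) + risk T (F p.2) = (∫ z, d p z ∂T) + 2 * ∫ z, g p z ∂T := by
    intro p
    calc risk T (F p.1) + risk T (F p.2) = ∫ z, (f p.1 z + f p.2 z) ∂T :=
          (integral_add (intf T p.1) (intf T p.2)).symm
    _ = ∫ z, (d p z + 2 * g p z) ∂T := by
        refine integral_congr_ae (Filter.Eventually.of_forall fun z => ?_)
        exact PacAux.l01_key _ _ _
    _ = (∫ z, d p z ∂T) + 2 * ∫ z, g p z ∂T := by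
        rw [integral_add (intd T p) ((intg T p).const_mul 2), integral_const_mul _ _]
  have hdisag : expDisag F (T.map Prod.fst) ρ = ∫ p, ∫ z, d p z ∂T ∂(ρ.prod ρ) := by
    rw [expDisag]
    refine integral_congr_ae (Filter.Eventually.of_forall fun p => ?_)
    exact integral_map measurable_fst.aemeasurable
      ((PacAux.measurable_l01 (hF.comp (measurable_const.prodMk measurable_id))
        (hF.comp (measurable_const.prodMk measurable_id))).aestronglyMeasurable)
  have hEq2 : 2 * gibbsRisk F T ρ
      = expDisag F (T.map Prod.fst) ρ + 2 * jointErr F T ρ := by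
    calc 2 * gibbsRisk F T ρ
        = (∫ p : H × H, risk T (F p.1) ∂(ρ.prod ρ))
          + ∫ p : H × H, risk T (F p.2) ∂(ρ.prod ρ) := by rw [hfst, hsnd]; ring
    _ = ∫ p : H × H, (risk T (F p.1) + risk T (F p.2)) ∂(ρ.prod ρ) :=
          (integral_add hint1 hint2).symm
    _ = ∫ p, ((∫ z, d p z ∂T) + 2 * ∫ z, g p z ∂T) ∂(ρ.prod ρ) :=
          integral_congr_ae (Filter.Eventually.of_forall key)
    _ = (∫ p, ∫ z, d p z ∂T ∂(ρ.prod ρ)) + 2 * ∫ p, ∫ z, g p z ∂T ∂(ρ.prod ρ) := by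
          rw [integral_add intDT ((intG T measure_univ.le).const_mul 2),
            integral_const_mul _ _]
    _ = expDisag F (T.map Prod.fst) ρ + 2 * jointErr F T ρ := by rw [hdisag, hJT]
  -- ## Step B : split the joint error over T
  set ν := S.withDensity (T.rnDeriv S) with hν_def
  set σ := T.singularPart S with hσ_def
  have hνle : ν ≤ T := Measure.withDensity_rnDeriv_le T S
  have hσle : σ ≤ T := Measure.singularPart_le T S
  have hν1 : ν Set.univ ≤ 1 := le_trans (hνle Set.univ) measure_univ.le
  have hσ1 : σ Set.univ ≤ 1 := le_trans (hσle Set.univ) measure_univ.le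
  haveI : IsFiniteMeasure ν := ⟨lt_of_le_of_lt hν1 ENNReal.one_lt_top⟩
  haveI : IsFiniteMeasure σ := ⟨lt_of_le_of_lt hσ1 ENNReal.one_lt_top⟩
  have hsum : ν + σ = T := Measure.rnDeriv_add_singularPart T S
  have hsplit : ∀ p : H × H, ∫ z, g p z ∂T = (∫ z, g p z ∂ν) + ∫ z, g p z ∂σ := by
    intro p
    rw [← hsum, integral_add_measure (intg ν p) (intg σ p)]
  have hJsplit : jointErr F T ρ
      = (∫ p, ∫ z, g p z ∂ν ∂(ρ.prod ρ)) + ∫ p, ∫ z, g p z ∂σ ∂(ρ.prod ρ) := by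
    rw [hJT]
    calc ∫ p, ∫ z, g p z ∂T ∂(ρ.prod ρ)
        = ∫ p, ((∫ z, g p z ∂ν) + ∫ z, g p z ∂σ) ∂(ρ.prod ρ) :=
          integral_congr_ae (Filter.Eventually.of_forall hsplit)
    _ = _ := integral_add (intG ν hν1) (intG σ hσ1)
  -- ## Step C : the singular part is bounded by η
  haveI : Nonempty H := by
    by_contra hne
    rw [not_nonempty_iff] at hne
    have h1 : ρ Set.univ = 1 := measure_univ
    simp [Set.univ_eq_empty_iff.mpr hne] at h1
  have hbdd : BddAbove (Set.range fun h : H => ∫ z, f h z ∂σ) := by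
    refine ⟨1, ?_⟩
    rintro _ ⟨h, rfl⟩
    exact PacAux.integral_le_one σ hσ1 (mfh h).aestronglyMeasurable (f0 h) (f1 h)
  have hC : ∀ p : H × H, ∫ z, g p z ∂σ ≤ etaTS F S T := by
    intro p
    calc ∫ z, g p z ∂σ ≤ ∫ z, f p.1 z ∂σ :=
          integral_mono (intg σ p) (intf σ p.1) (fun z =>
            mul_le_of_le_one_right (PacAux.l01_nonneg _ _) (PacAux.l01_le_one _ _))
    _ ≤ etaTS F S T := le_ciSup hbdd p.1
  have hJσ : ∫ p, ∫ z, g p z ∂σ ∂(ρ.prod ρ) ≤ etaTS F S T := by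
    calc ∫ p, ∫ z, g p z ∂σ ∂(ρ.prod ρ) ≤ ∫ _p : H × H, etaTS F S T ∂(ρ.prod ρ) :=
          integral_mono (intG σ hσ1) (integrable_const _) hC
    _ = etaTS F S T := by simp
  -- ## Step D : the absolutely continuous part, via Hölder and Jensen
  have hwd : ∀ p : H × H, ∫ z, g p z ∂ν = ∫ z, (T.rnDeriv S z).toReal * g p z ∂S := by
    intro p
    have h1 : ν = S.withDensity fun z => ((T.rnDeriv S z).toNNReal : ℝ≥0∞) := by
      rw [hν_def]
      exact withDensity_congr_ae ((Measure.rnDeriv_lt_top T S).mono fun z hz =>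
        (ENNReal.coe_toNNReal hz.ne).symm)
    rw [h1, integral_withDensity_eq_integral_smul
      (T.measurable_rnDeriv S).ennreal_toNNReal]
    rfl
  have hconj := Real.HolderConjugate.conjExponent hq
  have hD : ∀ p : H × H,
      ∫ z, g p z ∂ν ≤ betaQ S T q * (∫ z, g p z ∂S) ^ (1 - 1 / q) := by
    intro p
    rw [hwd p]
    exact PacAux.holder_step S hq (T.measurable_rnDeriv S).ennreal_toReal
      (fun z => ENNReal.toReal_nonneg) hβ (mgp p).aestronglyMeasurable (g0 p) (g1 p)
      (fun z => PacAux.l01_mul_rpow _ _ _ hconj.symm.ne_zero)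
  have hc0 : (0:ℝ) < 1 - 1 / q := by
    have : 1 / q < 1 := by rw [div_lt_one hq0]; exact hq
    linarith
  have hc1 : 1 - 1 / q < 1 := by
    have : 0 < 1 / q := by positivity
    linarith
  have hβ0 : 0 ≤ betaQ S T q :=
    Real.rpow_nonneg (integral_nonneg fun z =>
      Real.rpow_nonneg ENNReal.toReal_nonneg q) _
  have hJS : jointErr F S ρ = ∫ p, ∫ z, g p z ∂S ∂(ρ.prod ρ) := rfl
  have intRHS : Integrable
      (fun p : H × H => betaQ S T q * (∫ z, g p z ∂S) ^ (1 - 1 / q)) (ρ.prod ρ) := by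
    refine Integrable.const_mul ?_ _
    refine PacAux.integrable01 _ ?_ (fun p => Real.rpow_nonneg (Gb S measure_univ.le p).1 _)
      (fun p => Real.rpow_le_one (Gb S measure_univ.le p).1 (Gb S measure_univ.le p).2 hc0.le)
    exact ((Real.continuous_rpow_const hc0.le).comp_aestronglyMeasurable
      (mG S).aestronglyMeasurable)
  have hJν : ∫ p, ∫ z, g p z ∂ν ∂(ρ.prod ρ)
      ≤ betaQ S T q * (jointErr F S ρ) ^ (1 - 1 / q) := by
    calc ∫ p, ∫ z, g p z ∂ν ∂(ρ.prod ρ)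
        ≤ ∫ p, betaQ S T q * (∫ z, g p z ∂S) ^ (1 - 1 / q) ∂(ρ.prod ρ) :=
          integral_mono (intG ν hν1) intRHS hD
    _ = betaQ S T q * ∫ p, (∫ z, g p z ∂S) ^ (1 - 1 / q) ∂(ρ.prod ρ) :=
          integral_const_mul _ _
    _ ≤ betaQ S T q * (∫ p, ∫ z, g p z ∂S ∂(ρ.prod ρ)) ^ (1 - 1 / q) := by
          refine mul_le_mul_of_nonneg_left ?_ hβ0
          exact PacAux.jensen_rpow _ (mG S).aestronglyMeasurable
            (fun p => (Gb S measure_univ.le p).1) (fun p => (Gb S measure_univ.le p).2)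
            hc0 hc1
    _ = betaQ S T q * (jointErr F S ρ) ^ (1 - 1 / q) := by rw [hJS]
  -- ## Combine
  have hA : gibbsRisk F T ρ
      = (1 / 2) * expDisag F (T.map Prod.fst) ρ + jointErr F T ρ := by linarith
  rw [hA, hJsplit]
  linarith [hJν, hJσ]


end
end

section
/- Corollary 1(i) (generalization bound on the target expected disagreement): for any target domain T with marginal T_X, any prior probability measure π on H, any δ ∈ (0,1], and any c > 0, with probability at least 1−δ over the draw of T = {x_j}_{j=1}^{m_t} ~ (T_X)^{m_t}, simultaneously for every probability measure ρ on H: d_{T_X}(ρ) ≤ (c/(1−e^{−c})) · [ d̂_T(ρ) + (2·KL(ρ‖π) + ln(1/δ)) / (m_t·c) ]. -/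
open MeasureTheory

noncomputable section

section AuxPACBayes

variable {α : Type*} [MeasurableSpace α]

/-- Gibbs' inequality. -/
lemma gibbs_aux (μ ν : Measure α) [IsProbabilityMeasure μ] [IsProbabilityMeasure ν]
    (hμν : μ ≪ ν) (hint : Integrable (llr μ ν) μ) : 0 ≤ ∫ x, llr μ ν x ∂μ := by
  have hintl : Integrable (llr ν μ) μ := hint.neg.congr (neg_llr hμν)
  have hneg : ∫ x, llr ν μ x ∂μ = -∫ x, llr μ ν x ∂μ := by
    rw [← integral_neg]
    exact (integral_congr_ae (neg_llr hμν)).symm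
  have hpos : ∀ᵐ x ∂μ, 0 < ν.rnDeriv μ x := Measure.rnDeriv_pos' hμν
  have hlt : ∀ᵐ x ∂μ, ν.rnDeriv μ x < ⊤ := Measure.rnDeriv_lt_top ν μ
  have hb : ∀ᵐ x ∂μ, llr ν μ x ≤ (ν.rnDeriv μ x).toReal - 1 := by
    filter_upwards [hpos, hlt] with x h1 h2
    exact Real.log_le_sub_one_of_pos (ENNReal.toReal_pos h1.ne' h2.ne)
  have hint2 : Integrable (fun x => (ν.rnDeriv μ x).toReal - 1) μ :=
    Measure.integrable_toReal_rnDeriv.sub (integrable_const 1)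
  have h5 : ∫ x, llr ν μ x ∂μ ≤ ∫ x, ((ν.rnDeriv μ x).toReal - 1) ∂μ :=
    integral_mono_ae hintl hint2 hb
  have h3 : ∫ x, ((ν.rnDeriv μ x).toReal - 1) ∂μ
      = ∫ x, (ν.rnDeriv μ x).toReal ∂μ - 1 := by
    rw [integral_sub Measure.integrable_toReal_rnDeriv (integrable_const 1)]
    simp
  have h4 : ∫ x, (ν.rnDeriv μ x).toReal ∂μ ≤ 1 := by
    rw [Measure.integral_toReal_rnDeriv']
    simp only [measureReal_def, measure_univ, ENNReal.toReal_one]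
    have : (0:ℝ) ≤ ((ν.singularPart μ) Set.univ).toReal := ENNReal.toReal_nonneg
    linarith
  linarith

/-- Donsker–Varadhan-type change of measure inequality. -/
lemma dv_aux (μ ν : Measure α) [IsProbabilityMeasure μ] [IsProbabilityMeasure ν]
    (hμν : μ ≪ ν) (hllr : Integrable (llr μ ν) μ) (f : α → ℝ)
    (hfμ : Integrable f μ) (hfν : Integrable (fun x => Real.exp (f x)) ν) :
    ∫ x, f x ∂μ ≤ ∫ x, llr μ ν x ∂μ + Real.log (∫ x, Real.exp (f x) ∂ν) := by
  have hprob : IsProbabilityMeasure (ν.tilted f) := isProbabilityMeasure_tilted hfν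
  have hac : μ ≪ ν.tilted f := hμν.trans (absolutelyContinuous_tilted hfν)
  have hi : Integrable (llr μ (ν.tilted f)) μ := integrable_llr_tilted_right hμν hfμ hllr hfν
  have h0 : 0 ≤ ∫ x, llr μ (ν.tilted f) x ∂μ := gibbs_aux μ _ hac hi
  rw [integral_llr_tilted_right hμν hfμ hfν hllr] at h0
  linarith

/-- rnDeriv of a product. -/
lemma rnDeriv_prod_aux (ρ π : Measure α) [IsProbabilityMeasure ρ] [IsProbabilityMeasure π]
    (h : ρ ≪ π) :
    (ρ.prod ρ).rnDeriv (π.prod π)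
      =ᵐ[π.prod π] fun p => ρ.rnDeriv π p.1 * ρ.rnDeriv π p.2 := by
  have hm : Measurable fun p : α × α => ρ.rnDeriv π p.1 * ρ.rnDeriv π p.2 :=
    ((Measure.measurable_rnDeriv ρ π).comp measurable_fst).mul
      ((Measure.measurable_rnDeriv ρ π).comp measurable_snd)
  have hw : (π.prod π).withDensity (fun p => ρ.rnDeriv π p.1 * ρ.rnDeriv π p.2) = ρ.prod ρ := by
    refine (Measure.prod_eq fun s t hs ht => ?_).symm
    rw [withDensity_apply _ (hs.prod ht), ← Measure.prod_restrict,
      lintegral_prod_mul (Measure.measurable_rnDeriv ρ π).aemeasurable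
        (Measure.measurable_rnDeriv ρ π).aemeasurable,
      Measure.setLIntegral_rnDeriv h, Measure.setLIntegral_rnDeriv h]
  exact ((ρ.prod ρ).eq_rnDeriv (ν := π.prod π) hm Measure.MutuallySingular.zero_left
    (by rw [zero_add, hw])).symm

lemma llr_prod_aux (ρ π : Measure α) [IsProbabilityMeasure ρ] [IsProbabilityMeasure π]
    (h : ρ ≪ π) (hint : Integrable (llr ρ π) ρ) :
    Integrable (llr (ρ.prod ρ) (π.prod π)) (ρ.prod ρ) ∧
    ∫ p, llr (ρ.prod ρ) (π.prod π) p ∂(ρ.prod ρ) = 2 * ∫ x, llr ρ π x ∂ρ := by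
  have hac : ρ.prod ρ ≪ π.prod π := h.prod h
  set A : Set α := {x | 0 < ρ.rnDeriv π x ∧ ρ.rnDeriv π x < ⊤} with hA
  have hAae : ∀ᵐ x ∂ρ, x ∈ A := by
    filter_upwards [Measure.rnDeriv_pos h, h.ae_le (Measure.rnDeriv_lt_top ρ π)] with x h1 h2
    exact ⟨h1, h2⟩
  have hcompl : ρ Aᶜ = 0 := ae_iff.mp hAae
  have h1 : ∀ᵐ p ∂ρ.prod ρ, p.1 ∈ A ∧ p.2 ∈ A := by
    rw [ae_iff]
    refine measure_mono_null (fun p hp => ?_) (?_ : ρ.prod ρ ((Aᶜ ×ˢ Set.univ) ∪ (Set.univ ×ˢ Aᶜ)) = 0)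
    · simp only [Set.mem_setOf_eq, not_and_or] at hp
      rcases hp with hp | hp
      · exact Or.inl ⟨hp, trivial⟩
      · exact Or.inr ⟨trivial, hp⟩
    · refine le_antisymm ?_ zero_le
      refine le_trans (measure_union_le _ _) ?_
      rw [Measure.prod_prod, Measure.prod_prod, hcompl]
      simp
  have heq : llr (ρ.prod ρ) (π.prod π) =ᵐ[ρ.prod ρ] fun p => llr ρ π p.1 + llr ρ π p.2 := by
    filter_upwards [hac.ae_le (rnDeriv_prod_aux ρ π h), h1] with p hp hA'
    obtain ⟨⟨h1p, h1t⟩, ⟨h2p, h2t⟩⟩ := hA'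
    rw [llr, hp, ENNReal.toReal_mul, Real.log_mul, llr, llr]
    · exact ENNReal.toReal_ne_zero.mpr ⟨h1p.ne', h1t.ne⟩
    · exact ENNReal.toReal_ne_zero.mpr ⟨h2p.ne', h2t.ne⟩
  have hmapfst : (ρ.prod ρ).map Prod.fst = ρ := by simp
  have hmapsnd : (ρ.prod ρ).map Prod.snd = ρ := by simp
  have i1 : Integrable (fun p : α × α => llr ρ π p.1) (ρ.prod ρ) := by
    have := (integrable_map_measure (f := Prod.fst) (g := llr ρ π)
      (by rw [hmapfst]; exact (measurable_llr ρ π).aestronglyMeasurable)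
      measurable_fst.aemeasurable).mp (by rwa [hmapfst])
    exact this
  have i2 : Integrable (fun p : α × α => llr ρ π p.2) (ρ.prod ρ) := by
    have := (integrable_map_measure (f := Prod.snd) (g := llr ρ π)
      (by rw [hmapsnd]; exact (measurable_llr ρ π).aestronglyMeasurable)
      measurable_snd.aemeasurable).mp (by rwa [hmapsnd])
    exact this
  constructor
  · exact (i1.add i2).congr heq.symm
  · rw [integral_congr_ae heq, integral_add i1 i2]
    have e1 : ∫ p : α × α, llr ρ π p.1 ∂(ρ.prod ρ) = ∫ x, llr ρ π x ∂ρ := by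
      rw [← hmapfst, integral_map measurable_fst.aemeasurable
        (by rw [hmapfst]; exact (measurable_llr ρ π).aestronglyMeasurable)]
      rw [hmapfst]
    have e2 : ∫ p : α × α, llr ρ π p.2 ∂(ρ.prod ρ) = ∫ x, llr ρ π x ∂ρ := by
      rw [← hmapsnd, integral_map measurable_snd.aemeasurable
        (by rw [hmapsnd]; exact (measurable_llr ρ π).aestronglyMeasurable)]
      rw [hmapsnd]
    rw [e1, e2]; ring

set_option maxHeartbeats 1000000 in
/-- Core PAC-Bayes (Catoni-type) bound for a `{0,1}`-valued loss `g` on an abstract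
"hypothesis" space `W`. -/
lemma main_aux {Z W : Type*} [MeasurableSpace Z] [MeasurableSpace W]
    (g : W → Z → ℝ) (hg : Measurable (Function.uncurry g))
    (hg01 : ∀ w z, g w z = 0 ∨ g w z = 1)
    (μZ : Measure Z) [IsProbabilityMeasure μZ]
    (pr : Measure W) [IsProbabilityMeasure pr]
    (mt : ℕ) (hmt : 0 < mt) (δ c : ℝ) (hδ0 : 0 < δ) (hc : 0 < c) :
    (Measure.pi fun _ : Fin mt => μZ)
      {s | ∀ μ : Measure W, IsProbabilityMeasure μ → μ ≪ pr → Integrable (llr μ pr) μ →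
        (∫ w, ∫ z, g w z ∂μZ ∂μ) ≤ (c / (1 - Real.exp (-c))) *
          ((∫ w, (1 / (mt : ℝ)) * ∑ j : Fin mt, g w (s j) ∂μ) +
            ((∫ w, llr μ pr w ∂μ) + Real.log (1 / δ)) / ((mt : ℝ) * c))}
      ≥ ENNReal.ofReal (1 - δ) := by
  letI : MeasureSpace Z := ⟨μZ⟩
  have hvol : (volume : Measure Z) = μZ := rfl
  set P : Measure (Fin mt → Z) := Measure.pi fun _ : Fin mt => μZ with hPdef
  have hPvol : (volume : Measure (Fin mt → Z)) = P := by
    rw [MeasureTheory.volume_pi]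
    rfl
  haveI : IsProbabilityMeasure P := Measure.pi.instIsProbabilityMeasure _
  -- basic facts about g
  have hg0 : ∀ w z, 0 ≤ g w z := fun w z => by rcases hg01 w z with h | h <;> rw [h] <;> norm_num
  have hg1 : ∀ w z, g w z ≤ 1 := fun w z => by rcases hg01 w z with h | h <;> rw [h] <;> norm_num
  have hgm1 : ∀ w, Measurable (g w) := fun w => hg.comp measurable_prodMk_left
  have hgint : ∀ w, Integrable (g w) μZ := fun w =>
    (integrable_const (1:ℝ)).mono' (hgm1 w).aestronglyMeasurable
      (Filter.Eventually.of_forall fun z => by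
        rw [Real.norm_eq_abs, abs_of_nonneg (hg0 w z)]; exact hg1 w z)
  set c' : ℝ := 1 - Real.exp (-c) with hc'def
  have hc'pos : 0 < c' := by
    have : Real.exp (-c) < 1 := Real.exp_lt_one_iff.mpr (by linarith)
    simp only [hc'def]; linarith
  set R : W → ℝ := fun w => ∫ z, g w z ∂μZ with hRdef
  have hRm : StronglyMeasurable R := hg.stronglyMeasurable.integral_prod_right'
  have hR0 : ∀ w, 0 ≤ R w := fun w => integral_nonneg (hg0 w)
  have hR1 : ∀ w, R w ≤ 1 := fun w => by
    calc R w ≤ ∫ _, (1:ℝ) ∂μZ := integral_mono (hgint w) (integrable_const 1) (hg1 w)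
    _ = 1 := by simp
  have hpos : ∀ w, Real.exp (-c) ≤ 1 - c' * R w := fun w => by
    have h1 : c' * R w ≤ c' * 1 := by
      have := hR1 w; nlinarith [hR0 w]
    simp only [hc'def] at h1 ⊢; linarith
  have h1cr : ∀ w, 0 < 1 - c' * R w := fun w => lt_of_lt_of_le (Real.exp_pos _) (hpos w)
  set C : W → ℝ := fun w => -Real.log (1 - c' * R w) with hCdef
  have hCm : Measurable C :=
    (Real.measurable_log.comp (measurable_const.sub (hRm.measurable.const_mul c'))).neg
  have hC0 : ∀ w, 0 ≤ C w := fun w => by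
    have : Real.log (1 - c' * R w) ≤ 0 :=
      Real.log_nonpos (le_of_lt (h1cr w)) (by nlinarith [hR0 w, hc'pos])
    simp only [hCdef]; linarith
  have hCc : ∀ w, C w ≤ c := fun w => by
    have := Real.log_le_log (Real.exp_pos (-c)) (hpos w)
    rw [Real.log_exp] at this
    simp only [hCdef]; linarith
  have hCR : ∀ w, c' * R w ≤ C w := fun w => by
    have := Real.log_le_sub_one_of_pos (h1cr w)
    simp only [hCdef]; linarith
  set f : W → (Fin mt → Z) → ℝ :=
    fun w s => (mt : ℝ) * C w - c * ∑ j : Fin mt, g w (s j) with hfdef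
  have hsum_m : Measurable fun q : W × (Fin mt → Z) => ∑ j : Fin mt, g q.1 (q.2 j) := by
    apply Finset.measurable_sum
    intro j _
    exact hg.comp (measurable_fst.prodMk ((measurable_pi_apply j).comp measurable_snd))
  have hfm : Measurable fun q : W × (Fin mt → Z) => f q.1 q.2 :=
    (((hCm.comp measurable_fst)).const_mul ((mt : ℝ))).sub (hsum_m.const_mul c)
  have hsum0 : ∀ w (s : Fin mt → Z), 0 ≤ ∑ j : Fin mt, g w (s j) := fun w s =>
    Finset.sum_nonneg fun j _ => hg0 w (s j)
  have hsum1 : ∀ w (s : Fin mt → Z), (∑ j : Fin mt, g w (s j)) ≤ (mt : ℝ) := fun w s => by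
    calc (∑ j : Fin mt, g w (s j)) ≤ ∑ _j : Fin mt, (1:ℝ) :=
          Finset.sum_le_sum fun j _ => hg1 w (s j)
    _ = (mt : ℝ) := by simp
  have hfle : ∀ w s, f w s ≤ (mt : ℝ) * c := fun w s => by
    have h1 : (mt : ℝ) * C w ≤ (mt : ℝ) * c := by
      have := hCc w; nlinarith [Nat.cast_nonneg (α := ℝ) mt]
    have h2 : 0 ≤ c * ∑ j : Fin mt, g w (s j) := mul_nonneg hc.le (hsum0 w s)
    simp only [hfdef]; linarith
  have hfge : ∀ w s, -((mt : ℝ) * c) ≤ f w s := fun w s => by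
    have h1 : 0 ≤ (mt : ℝ) * C w := mul_nonneg (Nat.cast_nonneg mt) (hC0 w)
    have h2 : c * ∑ j : Fin mt, g w (s j) ≤ c * (mt : ℝ) := by
      have := hsum1 w s; nlinarith
    simp only [hfdef]; linarith
  have hfabs : ∀ w s, ‖f w s‖ ≤ (mt : ℝ) * c := fun w s => by
    rw [Real.norm_eq_abs, abs_le]; exact ⟨hfge w s, hfle w s⟩
  -- Step A: for every w, the exponential moment over the sample is 1
  have hexpz : ∀ w, ∫ z, Real.exp (-(c * g w z)) ∂μZ = 1 - c' * R w := by
    intro w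
    have h1 : ∀ z, Real.exp (-(c * g w z)) = 1 - c' * g w z := fun z => by
      rcases hg01 w z with h | h <;> rw [h] <;> simp [hc'def]
    rw [integral_congr_ae (Filter.Eventually.of_forall h1),
      integral_sub (integrable_const 1) ((hgint w).const_mul c'),
      integral_const_mul, integral_const]
    simp [hRdef]
  have hA : ∀ w, ∫ s, Real.exp (f w s) ∂P = 1 := by
    intro w
    have h1 : ∀ s, Real.exp (f w s)
        = Real.exp ((mt : ℝ) * C w) * ∏ j : Fin mt, Real.exp (-(c * g w (s j))) := by
      intro s
      rw [← Real.exp_sum, ← Real.exp_add]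
      congr 1
      simp only [hfdef, Finset.mul_sum, Finset.sum_neg_distrib]
      ring
    calc ∫ s, Real.exp (f w s) ∂P
        = ∫ s, Real.exp ((mt : ℝ) * C w) * ∏ j : Fin mt, Real.exp (-(c * g w (s j))) ∂P :=
          integral_congr_ae (Filter.Eventually.of_forall h1)
      _ = Real.exp ((mt : ℝ) * C w)
            * ∫ s, ∏ j : Fin mt, Real.exp (-(c * g w (s j))) ∂P := integral_const_mul _ _
      _ = Real.exp ((mt : ℝ) * C w) * (∫ z, Real.exp (-(c * g w z)) ∂μZ) ^ mt := by
          have h := MeasureTheory.integral_fintype_prod_volume_eq_pow (𝕜 := ℝ) (ι := Fin mt)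
            (fun z => Real.exp (-(c * g w z)))
          simp only [Fintype.card_fin] at h
          rw [← hPvol, ← hvol]
          exact congrArg (fun t => Real.exp ((mt : ℝ) * C w) * t) h
      _ = 1 := by
          rw [hexpz w, Real.exp_nat_mul]
          have hCw : Real.exp (C w) = (1 - c' * R w)⁻¹ := by
            rw [hCdef]
            simp only []
            rw [Real.exp_neg, Real.exp_log (h1cr w)]
          rw [hCw, ← mul_pow, inv_mul_cancel₀ (ne_of_gt (h1cr w)), one_pow]
  -- joint integrability over P.prod pr
  have hFm : Measurable fun q : (Fin mt → Z) × W => Real.exp (f q.2 q.1) :=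
    Real.measurable_exp.comp (hfm.comp measurable_swap)
  have hFint : Integrable (Function.uncurry fun s w => Real.exp (f w s)) (P.prod pr) := by
    refine (integrable_const (Real.exp ((mt : ℝ) * c))).mono' hFm.aestronglyMeasurable
      (Filter.Eventually.of_forall fun q => ?_)
    show ‖Real.exp (f q.2 q.1)‖ ≤ _
    rw [Real.norm_eq_abs, abs_of_nonneg (Real.exp_nonneg _)]
    exact Real.exp_le_exp.mpr (hfle q.2 q.1)
  set Φ : (Fin mt → Z) → ℝ := fun s => ∫ w, Real.exp (f w s) ∂pr with hΦdef
  have hΦm : StronglyMeasurable Φ := hFm.stronglyMeasurable.integral_prod_right'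
  have hΦ0 : ∀ s, 0 ≤ Φ s := fun s => integral_nonneg fun w => Real.exp_nonneg _
  have hΦint : Integrable Φ P := hFint.integral_prod_left
  have hΦtot : ∫ s, Φ s ∂P = 1 := by
    have hswap := integral_integral_swap (f := fun s w => Real.exp (f w s)) hFint
    rw [hΦdef]
    simp only []
    rw [hswap]
    calc ∫ w, ∫ s, Real.exp (f w s) ∂P ∂pr = ∫ _w, (1:ℝ) ∂pr :=
          integral_congr_ae (Filter.Eventually.of_forall fun w => hA w)
      _ = 1 := by simp
  -- Markov
  set B : Set (Fin mt → Z) := {s | 1 / δ ≤ Φ s} with hBdef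
  have hBmeas : MeasurableSet B := measurableSet_le measurable_const hΦm.measurable
  have hmar : (1 / δ) * (P B).toReal ≤ 1 := by
    have := mul_meas_ge_le_integral_of_nonneg
      (Filter.Eventually.of_forall hΦ0) hΦint (1 / δ)
    rw [hΦtot] at this
    exact this
  have htoReal : (P B).toReal ≤ δ := by
    rw [one_div] at hmar
    have h := mul_le_mul_of_nonneg_left hmar hδ0.le
    rw [← mul_assoc, mul_inv_cancel₀ hδ0.ne', one_mul, mul_one] at h
    exact h
  have hPB : P B ≤ ENNReal.ofReal δ := by
    rw [← ENNReal.ofReal_toReal (measure_ne_top P B)]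
    exact ENNReal.ofReal_le_ofReal htoReal
  -- the good event implies the bound for all posteriors
  have hsub : Bᶜ ⊆ {s | ∀ μ : Measure W, IsProbabilityMeasure μ → μ ≪ pr →
      Integrable (llr μ pr) μ →
      (∫ w, ∫ z, g w z ∂μZ ∂μ) ≤ (c / (1 - Real.exp (-c))) *
        ((∫ w, (1 / (mt : ℝ)) * ∑ j : Fin mt, g w (s j) ∂μ) +
          ((∫ w, llr μ pr w ∂μ) + Real.log (1 / δ)) / ((mt : ℝ) * c))} := by
    intro s hs μ hμ hacμ hintμ
    haveI := hμ
    have hΦlt : Φ s < 1 / δ := lt_of_not_ge hs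
    set fs : W → ℝ := fun w => f w s with hfsdef
    have hfsm : Measurable fs := hfm.comp (measurable_id.prodMk measurable_const)
    have hfs_int : Integrable fs μ :=
      (integrable_const ((mt : ℝ) * c)).mono' hfsm.aestronglyMeasurable
        (Filter.Eventually.of_forall fun w => hfabs w s)
    have hexp_int : Integrable (fun w => Real.exp (fs w)) pr :=
      (integrable_const (Real.exp ((mt : ℝ) * c))).mono'
        (Real.measurable_exp.comp hfsm).aestronglyMeasurable
        (Filter.Eventually.of_forall fun w => by
          rw [Real.norm_eq_abs, abs_of_nonneg (Real.exp_nonneg _)]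
          exact Real.exp_le_exp.mpr (hfle w s))
    have hΦpos : 0 < Φ s := integral_exp_pos hexp_int
    have hdv := dv_aux μ pr hacμ hintμ fs hfs_int hexp_int
    have hlog : Real.log (∫ w, Real.exp (fs w) ∂pr) ≤ Real.log (1 / δ) :=
      Real.log_le_log hΦpos (le_of_lt hΦlt)
    -- decompose ∫ fs dμ
    have hCint : Integrable C μ :=
      (integrable_const c).mono' hCm.aestronglyMeasurable
        (Filter.Eventually.of_forall fun w => by
          rw [Real.norm_eq_abs, abs_of_nonneg (hC0 w)]; exact hCc w)
    have hSm : Measurable fun w => ∑ j : Fin mt, g w (s j) :=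
      hsum_m.comp (measurable_id.prodMk measurable_const)
    have hSint : Integrable (fun w => ∑ j : Fin mt, g w (s j)) μ :=
      (integrable_const ((mt : ℝ))).mono' hSm.aestronglyMeasurable
        (Filter.Eventually.of_forall fun w => by
          rw [Real.norm_eq_abs, abs_of_nonneg (hsum0 w s)]; exact hsum1 w s)
    have hfs_eq : ∫ w, fs w ∂μ
        = (mt : ℝ) * ∫ w, C w ∂μ - c * ∫ w, (∑ j : Fin mt, g w (s j)) ∂μ := by
      calc ∫ w, fs w ∂μ
          = ∫ w, ((mt : ℝ) * C w - c * ∑ j : Fin mt, g w (s j)) ∂μ := rfl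
        _ = (mt : ℝ) * ∫ w, C w ∂μ - c * ∫ w, (∑ j : Fin mt, g w (s j)) ∂μ := by
            rw [integral_sub (hCint.const_mul _) (hSint.const_mul c),
              integral_const_mul, integral_const_mul]
    have hRint : Integrable R μ :=
      (integrable_const (1:ℝ)).mono' hRm.aestronglyMeasurable
        (Filter.Eventually.of_forall fun w => by
          rw [Real.norm_eq_abs, abs_of_nonneg (hR0 w)]; exact hR1 w)
    have hCD : c' * ∫ w, R w ∂μ ≤ ∫ w, C w ∂μ := by
      rw [← integral_const_mul]
      exact integral_mono (hRint.const_mul c') hCint hCR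
    set D : ℝ := ∫ w, R w ∂μ with hDdef
    set S : ℝ := ∫ w, (∑ j : Fin mt, g w (s j)) ∂μ with hSdef
    set K : ℝ := (∫ w, llr μ pr w ∂μ) + Real.log (1 / δ) with hKdef
    have hcombine : (mt : ℝ) * (c' * D) ≤ c * S + K := by
      have h1 : (mt : ℝ) * (c' * D) ≤ (mt : ℝ) * ∫ w, C w ∂μ := by
        have := hCD; nlinarith [(Nat.cast_pos (α := ℝ)).mpr hmt]
      have h2 : (mt : ℝ) * ∫ w, C w ∂μ - c * S ≤ K := by
        rw [← hfs_eq]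
        calc ∫ w, fs w ∂μ ≤ (∫ w, llr μ pr w ∂μ) + Real.log (∫ w, Real.exp (fs w) ∂pr) := hdv
          _ ≤ K := by rw [hKdef]; linarith
      linarith
    have hgoalval : ∫ w, (1 / (mt : ℝ)) * ∑ j : Fin mt, g w (s j) ∂μ = (1 / (mt : ℝ)) * S := by
      rw [hSdef, ← integral_const_mul]
    have hLHS : (∫ w, ∫ z, g w z ∂μZ ∂μ) = D := rfl
    have hmtpos : (0:ℝ) < (mt:ℝ) := Nat.cast_pos.mpr hmt
    rw [hgoalval, ← hc'def]
    have hrhs : (c / c') * ((1 / (mt:ℝ)) * S + K / ((mt:ℝ) * c))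
        = (c * S + K) / ((mt:ℝ) * c') := by
      field_simp
    rw [hrhs, le_div_iff₀ (by positivity)]
    nlinarith [hcombine]
  calc ENNReal.ofReal (1 - δ) = 1 - ENNReal.ofReal δ := by
        rw [ENNReal.ofReal_sub 1 hδ0.le, ENNReal.ofReal_one]
    _ ≤ 1 - P B := tsub_le_tsub_left hPB 1
    _ = P Bᶜ := by rw [measure_compl hBmeas (measure_ne_top _ _), measure_univ]
    _ ≤ _ := measure_mono hsub

end AuxPACBayes


variable {X H : Type*} [MeasurableSpace X] [MeasurableSpace H]

/-- The Kullback–Leibler divergence `KL(ρ‖π) = E_{h~ρ} ln(dρ/dπ)` (for `ρ ≪ π` with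
integrable log-likelihood ratio, i.e. the cases where `KL(ρ‖π) < +∞`). -/
def klReal (ρ π : Measure H) : ℝ := ∫ h, llr ρ π h ∂ρ

/-- Corollary 1(i) (generalization bound on the target expected disagreement): for any target
domain `T` with marginal `T_X`, any prior `π` on `H`, any `δ ∈ (0,1]` and any `c > 0`, with
probability at least `1−δ` over an i.i.d. `m_t`-sample from `T_X`, simultaneously for every
posterior `ρ` on `H` (with `KL(ρ‖π) < ∞`):
`d_{T_X}(ρ) ≤ (c/(1−e^{−c})) · [ d̂_T(ρ) + (2·KL(ρ‖π) + ln(1/δ))/(m_t·c) ]`. -/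
theorem disagreement_generalization_bound
    (F : H → X → Bool) (hF : Measurable (Function.uncurry F))
    (T : Measure (X × Bool)) [IsProbabilityMeasure T]
    (π : Measure H) [IsProbabilityMeasure π]
    (mt : ℕ) (hmt : 0 < mt)
    (δ : ℝ) (hδ : δ ∈ Set.Ioc (0 : ℝ) 1)
    (c : ℝ) (hc : 0 < c) :
    (Measure.pi fun _ : Fin mt => T.map Prod.fst)
      {s | ∀ ρ : Measure H, IsProbabilityMeasure ρ → ρ ≪ π →
        Integrable (llr ρ π) ρ →
        expDisag F (T.map Prod.fst) ρ
          ≤ (c / (1 - Real.exp (-c))) *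
              ((∫ p, (1 / (mt : ℝ)) * ∑ j : Fin mt, l01 (F p.1 (s j)) (F p.2 (s j))
                  ∂(ρ.prod ρ))
                + (2 * klReal ρ π + Real.log (1 / δ)) / ((mt : ℝ) * c))}
      ≥ ENNReal.ofReal (1 - δ) := by
  obtain ⟨hδ0, hδ1⟩ := hδ
  haveI : IsProbabilityMeasure (T.map Prod.fst) :=
    Measure.isProbabilityMeasure_map measurable_fst.aemeasurable
  have hgm : Measurable (Function.uncurry fun (p : H × H) (x : X) =>
      l01 (F p.1 x) (F p.2 x)) := by
    have hpair : Measurable fun q : (H × H) × X => (F q.1.1 q.2, F q.1.2 q.2) :=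
      (hF.comp (measurable_fst.fst.prodMk measurable_snd)).prodMk
        (hF.comp (measurable_fst.snd.prodMk measurable_snd))
    exact (measurable_of_countable fun ab : Bool × Bool => l01 ab.1 ab.2).comp hpair
  have hg01 : ∀ (p : H × H) (x : X),
      l01 (F p.1 x) (F p.2 x) = 0 ∨ l01 (F p.1 x) (F p.2 x) = 1 := by
    intro p x
    unfold l01
    split <;> simp
  have key := main_aux (fun (p : H × H) (x : X) => l01 (F p.1 x) (F p.2 x)) hgm hg01
    (T.map Prod.fst) (π.prod π) mt hmt δ c hδ0 hc
  refine le_trans key (measure_mono ?_)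
  intro s hs ρ hρ hac hint
  haveI := hρ
  have h2 := llr_prod_aux ρ π hac hint
  have h3 := hs (ρ.prod ρ) inferInstance (hac.prod hac) h2.1
  rw [h2.2] at h3
  simpa [expDisag, klReal, mul_comm] using h3


end
end
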